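/- Let f₁,…,f_ℓ, g₁,…,g_r ∈ ℂ[T] be nonzero polynomials such that Z(f₁⋯f_ℓ) ∩ Z(g₁⋯g_r) = ∅. Then for all natural numbers n₁,…,n_ℓ, m₁,…,m_r ≥ 0 and every t ∈ ℂ, the multiplicity of t as a root of the polynomial f₁^{n₁}⋯f_ℓ^{n_ℓ} − g₁^{m₁}⋯g_r^{m_r} is at most Σ_{i=1}^{ℓ} d_{f_i} + Σ_{j=1}^{r} d_{g_j}. -/

import Mathlib

open Polynomial Finset

lemma my_derivative_finset_prod {ι} [DecidableEq ι] (s : Finset ι) (h : ι → Polynomial ℂ) :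
    derivative (∏ i ∈ s, h i) = ∑ i ∈ s, (∏ k ∈ s.erase i, h k) * derivative (h i) := by
  classical
  induction s using Finset.induction_on with
  | empty => simp
  | insert _ _ ha ih =>
    rename_i a s
    rw [Finset.prod_insert ha, derivative_mul, Finset.sum_insert ha, ih, Finset.mul_sum]
    rw [Finset.erase_insert ha]
    congr 1
    · ring
    · apply Finset.sum_congr rfl
      intro i hi
      rw [Finset.erase_insert_of_ne (by rintro rfl; exact ha hi),
        Finset.prod_insert (fun h => ha (Finset.mem_of_mem_erase h))]
      ring

lemma my_key {ι} [DecidableEq ι] (s : Finset ι) (f : ι → Polynomial ℂ) (n : ι → ℕ) :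
    derivative (∏ i ∈ s, f i ^ n i) * ∏ i ∈ s, f i
      = (∏ i ∈ s, f i ^ n i) *
        ∑ i ∈ s, C (n i : ℂ) * derivative (f i) * ∏ k ∈ s.erase i, f k := by
  rw [my_derivative_finset_prod, Finset.sum_mul, Finset.mul_sum]
  apply Finset.sum_congr rfl
  intro i hi
  rw [derivative_pow]
  rcases Nat.eq_zero_or_pos (n i) with h0 | h0
  · simp [h0]
  · have h1 : f i ^ (n i - 1) * f i = f i ^ n i := by
      rw [← pow_succ]; congr 1; omega
    rw [← Finset.mul_prod_erase s f hi, ← Finset.mul_prod_erase s (fun k => f k ^ n k) hi,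
      ← h1]
    ring

/-- Lemma 2.8 (multiplicities of zeros): if the zero sets of `f₁⋯f_ℓ` and `g₁⋯g_r`
are disjoint, then every root of `∏ fᵢ^{nᵢ} − ∏ gⱼ^{mⱼ}` has multiplicity at most
`∑ d_{fᵢ} + ∑ d_{gⱼ}`. -/
theorem stmt_11 (ℓ r : ℕ) (f : Fin ℓ → Polynomial ℂ) (g : Fin r → Polynomial ℂ)
    (hf : ∀ i, f i ≠ 0) (hg : ∀ j, g j ≠ 0)
    (hZ : ∀ t : ℂ, ¬ ((∏ i, f i).eval t = 0 ∧ (∏ j, g j).eval t = 0))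
    (n : Fin ℓ → ℕ) (m : Fin r → ℕ) (t : ℂ) :
    (∏ i, f i ^ n i - ∏ j, g j ^ m j).rootMultiplicity t ≤
      ∑ i, (f i).natDegree + ∑ j, (g j).natDegree := by
  classical
  set F := ∏ i, f i ^ n i with hFdef
  set G := ∏ j, g j ^ m j with hGdef
  set P := ∏ i, f i with hPdef
  set Q := ∏ j, g j with hQdef
  have hP0 : P ≠ 0 := Finset.prod_ne_zero_iff.mpr fun i _ => hf i
  have hQ0 : Q ≠ 0 := Finset.prod_ne_zero_iff.mpr fun j _ => hg j
  have hF0 : F ≠ 0 := Finset.prod_ne_zero_iff.mpr fun i _ => pow_ne_zero _ (hf i)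
  have hG0 : G ≠ 0 := Finset.prod_ne_zero_iff.mpr fun j _ => pow_ne_zero _ (hg j)
  set h := F - G with hhdef
  by_cases hh : h = 0
  · simp [hh]
  set e := h.rootMultiplicity t with hedef
  rcases Nat.eq_zero_or_pos e with he0 | he1
  · exact he0 ▸ Nat.zero_le _
  have ht : h.IsRoot t := (rootMultiplicity_pos hh).mp he1
  have hFG : F.eval t = G.eval t := by
    have : h.eval t = 0 := ht
    rw [hhdef, eval_sub, sub_eq_zero] at this
    exact this
  have hFt : F.eval t ≠ 0 := by
    intro h0
    apply hZ t
    constructor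
    · show P.eval t = 0
      rw [hFdef, eval_prod] at h0
      obtain ⟨i, -, hi⟩ := Finset.prod_eq_zero_iff.mp h0
      rw [eval_pow] at hi
      have hni : n i ≠ 0 := by intro h00; rw [h00] at hi; simp at hi
      rw [hPdef, eval_prod]
      exact Finset.prod_eq_zero (mem_univ i) ((pow_eq_zero_iff hni).mp hi)
    · show Q.eval t = 0
      rw [hFG, hGdef, eval_prod] at h0
      obtain ⟨j, -, hj⟩ := Finset.prod_eq_zero_iff.mp h0
      rw [eval_pow] at hj
      have hmj : m j ≠ 0 := by intro h00; rw [h00] at hj; simp at hj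
      rw [hQdef, eval_prod]
      exact Finset.prod_eq_zero (mem_univ j) ((pow_eq_zero_iff hmj).mp hj)
  have hGt : G.eval t ≠ 0 := hFG ▸ hFt
  set U := ∑ i, C (n i : ℂ) * derivative (f i) * ∏ k ∈ univ.erase i, f k with hUdef
  set V := ∑ j, C (m j : ℂ) * derivative (g j) * ∏ k ∈ univ.erase j, g k with hVdef
  have hU : derivative F * P = F * U := my_key univ f n
  have hV : derivative G * Q = G * V := my_key univ g m
  set S := U * Q - P * V with hSdef
  set W := derivative h * G - h * derivative G with hWdef
  have hW2 : W = derivative F * G - F * derivative G := by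
    rw [hWdef, hhdef, derivative_sub]; ring
  have hWPQ : W * (P * Q) = (F * G) * S := by
    calc W * (P * Q)
        = (derivative F * P) * (G * Q) - (derivative G * Q) * (F * P) := by rw [hW2]; ring
      _ = (F * U) * (G * Q) - (G * V) * (F * P) := by rw [hU, hV]
      _ = (F * G) * S := by rw [hSdef]; ring
  have hh' : derivative h ≠ 0 := by
    intro h0
    have hd0 : h.natDegree = 0 := natDegree_eq_zero_of_derivative_eq_zero h0
    have := eq_C_of_natDegree_eq_zero hd0
    rw [this] at ht
    have : h.coeff 0 = 0 := by simpa [IsRoot] using ht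
    exact hh (by rw [‹h = C (h.coeff 0)›, this, map_zero])
  have hW0 : W ≠ 0 := by
    intro h0
    have hgd : derivative h * G = h * derivative G := sub_eq_zero.mp h0
    have hG' : derivative G ≠ 0 := by
      intro hg0
      rw [hg0, mul_zero] at hgd
      rcases mul_eq_zero.mp hgd with h1 | h1
      · exact hh' h1
      · exact hG0 h1
    have heq : (derivative h * G).rootMultiplicity t = (h * derivative G).rootMultiplicity t := by
      rw [hgd]
    rw [rootMultiplicity_mul (mul_ne_zero hh' hG0),
      rootMultiplicity_mul (mul_ne_zero hh hG')] at heq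
    have hGm : G.rootMultiplicity t = 0 := rootMultiplicity_eq_zero hGt
    have hd : (derivative h).rootMultiplicity t = e - 1 :=
      derivative_rootMultiplicity_of_root ht
    omega
  have hS0 : S ≠ 0 := by
    intro h0
    apply hW0
    have : W * (P * Q) = 0 := by rw [hWPQ, h0, mul_zero]
    rcases mul_eq_zero.mp this with h1 | h1
    · exact h1
    · exact absurd h1 (mul_ne_zero hP0 hQ0)
  -- e - 1 ≤ rootMultiplicity t W
  have hdvdh : (X - C t) ^ (e - 1) ∣ h :=
    dvd_trans (pow_dvd_pow _ (Nat.sub_le e 1)) (pow_rootMultiplicity_dvd h t)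
  have hdvdh' : (X - C t) ^ (e - 1) ∣ derivative h :=
    dvd_trans (pow_dvd_pow _ (rootMultiplicity_sub_one_le_derivative_rootMultiplicity h t))
      (pow_rootMultiplicity_dvd _ t)
  have hdvdW : (X - C t) ^ (e - 1) ∣ W :=
    dvd_sub (hdvdh'.mul_right _) (hdvdh.mul_right _)
  have hle1 : e - 1 ≤ W.rootMultiplicity t := (le_rootMultiplicity_iff hW0).mpr hdvdW
  have hmulW : (W * (P * Q)).rootMultiplicity t
      = W.rootMultiplicity t + (P * Q).rootMultiplicity t :=
    rootMultiplicity_mul (mul_ne_zero hW0 (mul_ne_zero hP0 hQ0))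
  have hmulS : ((F * G) * S).rootMultiplicity t
      = (F * G).rootMultiplicity t + S.rootMultiplicity t :=
    rootMultiplicity_mul (mul_ne_zero (mul_ne_zero hF0 hG0) hS0)
  have hFGm : (F * G).rootMultiplicity t = 0 :=
    rootMultiplicity_eq_zero (by simp [IsRoot, hFt, hGt])
  have hSm : e - 1 ≤ S.rootMultiplicity t := by
    have := hWPQ ▸ hmulW
    omega
  have hSdeg : S.rootMultiplicity t ≤ S.natDegree := by
    have := natDegree_le_of_dvd (pow_rootMultiplicity_dvd S t) hS0
    simpa [natDegree_pow, natDegree_X_sub_C] using this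
  -- degree bounds
  have hdegterm : ∀ i : Fin ℓ,
      (C (n i : ℂ) * derivative (f i) * ∏ k ∈ univ.erase i, f k).natDegree + 1
        ≤ ∑ i, (f i).natDegree ∨
      C (n i : ℂ) * derivative (f i) * ∏ k ∈ univ.erase i, f k = 0 := by
    intro i
    by_cases hdi : derivative (f i) = 0
    · right; rw [hdi]; ring
    · left
      have h1 : 1 ≤ (f i).natDegree := by
        by_contra hc
        push_neg at hc
        interval_cases hfi : (f i).natDegree
        · exact hdi (by rw [eq_C_of_natDegree_eq_zero hfi]; simp)
      have h2 : (derivative (f i)).natDegree ≤ (f i).natDegree - 1 :=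
        natDegree_derivative_le (f i)
      have h3 : (∏ k ∈ univ.erase i, f k).natDegree = ∑ k ∈ univ.erase i, (f k).natDegree :=
        natDegree_prod _ _ fun k _ => hf k
      have h4 : (f i).natDegree + ∑ k ∈ univ.erase i, (f k).natDegree
          = ∑ k, (f k).natDegree := Finset.add_sum_erase univ (fun k => (f k).natDegree) (mem_univ i)
      have h5 := natDegree_mul_le (p := C (n i : ℂ) * derivative (f i))
        (q := ∏ k ∈ univ.erase i, f k)
      have h6 := natDegree_C_mul_le (n i : ℂ) (derivative (f i))
      omega
  have hdegU : ∀ i : Fin ℓ,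
      ((C (n i : ℂ) * derivative (f i) * ∏ k ∈ univ.erase i, f k) * Q).natDegree
        ≤ ∑ i, (f i).natDegree + ∑ j, (g j).natDegree - 1 := by
    intro i
    rcases hdegterm i with hi | hi
    · have h5 := natDegree_mul_le (p := C (n i : ℂ) * derivative (f i) * ∏ k ∈ univ.erase i, f k)
        (q := Q)
      have hQd : Q.natDegree = ∑ j, (g j).natDegree := natDegree_prod _ _ fun j _ => hg j
      omega
    · rw [hi, zero_mul]
      simp
  have hdegtermV : ∀ j : Fin r,
      (C (m j : ℂ) * derivative (g j) * ∏ k ∈ univ.erase j, g k).natDegree + 1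
        ≤ ∑ j, (g j).natDegree ∨
      C (m j : ℂ) * derivative (g j) * ∏ k ∈ univ.erase j, g k = 0 := by
    intro j
    by_cases hdj : derivative (g j) = 0
    · right; rw [hdj]; ring
    · left
      have h1 : 1 ≤ (g j).natDegree := by
        by_contra hc
        push_neg at hc
        interval_cases hgj : (g j).natDegree
        · exact hdj (by rw [eq_C_of_natDegree_eq_zero hgj]; simp)
      have h2 : (derivative (g j)).natDegree ≤ (g j).natDegree - 1 :=
        natDegree_derivative_le (g j)
      have h3 : (∏ k ∈ univ.erase j, g k).natDegree = ∑ k ∈ univ.erase j, (g k).natDegree :=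
        natDegree_prod _ _ fun k _ => hg k
      have h4 : (g j).natDegree + ∑ k ∈ univ.erase j, (g k).natDegree
          = ∑ k, (g k).natDegree := Finset.add_sum_erase univ (fun k => (g k).natDegree) (mem_univ j)
      have h5 := natDegree_mul_le (p := C (m j : ℂ) * derivative (g j))
        (q := ∏ k ∈ univ.erase j, g k)
      have h6 := natDegree_C_mul_le (m j : ℂ) (derivative (g j))
      omega
  have hdegV : ∀ j : Fin r,
      (P * (C (m j : ℂ) * derivative (g j) * ∏ k ∈ univ.erase j, g k)).natDegree
        ≤ ∑ i, (f i).natDegree + ∑ j, (g j).natDegree - 1 := by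
    intro j
    rcases hdegtermV j with hj | hj
    · have h5 := natDegree_mul_le (p := P)
        (q := C (m j : ℂ) * derivative (g j) * ∏ k ∈ univ.erase j, g k)
      have hPd : P.natDegree = ∑ i, (f i).natDegree := natDegree_prod _ _ fun i _ => hf i
      omega
    · rw [hj, mul_zero]
      simp
  have hSdegle : S.natDegree ≤ ∑ i, (f i).natDegree + ∑ j, (g j).natDegree - 1 := by
    refine (natDegree_sub_le _ _).trans (max_le ?_ ?_)
    · rw [hUdef, Finset.sum_mul]
      exact natDegree_sum_le_of_forall_le _ _ fun i _ => hdegU i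
    · rw [hVdef, Finset.mul_sum]
      exact natDegree_sum_le_of_forall_le _ _ fun j _ => hdegV j
  -- rule out total degree 0
  by_cases hD : ∑ i, (f i).natDegree + ∑ j, (g j).natDegree = 0
  · exfalso
    apply hS0
    have hU0 : U = 0 := by
      rw [hUdef]
      apply Finset.sum_eq_zero
      intro i _
      have : (f i).natDegree = 0 := by
        have := Finset.sum_eq_zero_iff.mp (by omega : ∑ i, (f i).natDegree = 0) i (mem_univ i)
        exact this
      rw [eq_C_of_natDegree_eq_zero this]
      simp
    have hV0 : V = 0 := by
      rw [hVdef]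
      apply Finset.sum_eq_zero
      intro j _
      have : (g j).natDegree = 0 := by
        have := Finset.sum_eq_zero_iff.mp (by omega : ∑ j, (g j).natDegree = 0) j (mem_univ j)
        exact this
      rw [eq_C_of_natDegree_eq_zero this]
      simp
    rw [hSdef, hU0, hV0, zero_mul, mul_zero, sub_zero]
  · omega
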